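/- arXiv:1711.09935 — 4 statements merged into one kernel-verified Lean document; each statement's English description precedes it below -/
import Mathlib

section
/- Let k be a positive integer such that a Hadamard matrix of order k exists, and let n be a positive integer divisible by k. Then there exists a matrix A ∈ {0,1}^{n×n} with the k-consecutive ones property such that |det(A)| = k^((n−k)/2). -/
open scoped Classical
open Matrix

/-- A 0/1-matrix `A` has the `k`-consecutive ones property if in every row the 1-entries
form at most `k` blocks of consecutive entries. -/
def KConsecutiveOnes {n : ℕ} (A : Matrix (Fin n) (Fin n) ℝ) (k : ℕ) : Prop :=
  ∀ i : Fin n, ∃ s : Finset (ℕ × ℕ), s.card ≤ k ∧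
    ∀ j : Fin n, A i j = 1 ↔ ∃ p ∈ s, p.1 ≤ (j : ℕ) ∧ (j : ℕ) ≤ p.2

section AuxDefs

/-- The 0/1 indicator matrix of the `+1`-entries of a `±1`-matrix. -/
noncomputable def PmAux {k : ℕ} (H : Matrix (Fin k) (Fin k) ℝ) : Matrix (Fin k) (Fin k) ℝ :=
  fun s t => if H s t = 1 then 1 else 0

/-- Blockwise lower-triangular factor. -/
noncomputable def LmAux {k : ℕ} (m : ℕ) (H : Matrix (Fin k) (Fin k) ℝ) :
    Matrix (Fin k × Fin (m + 1)) (Fin k × Fin (m + 1)) ℝ :=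
  fun x y =>
    if (x.2 : ℕ) = 0 then (if (y.2 : ℕ) = 0 ∧ x.1 = y.1 then 1 else 0)
    else if (y.2 : ℕ) + 1 = (x.2 : ℕ) then PmAux H x.1 y.1
    else if (x.2 : ℕ) = (y.2 : ℕ) then -(H x.1 y.1) else 0

/-- Blockwise upper-triangular factor. -/
noncomputable def UmAux (k m : ℕ) : Matrix (Fin k × Fin (m + 1)) (Fin k × Fin (m + 1)) ℝ :=
  fun x y => if (x.2 : ℕ) ≤ (y.2 : ℕ) ∧ x.1 = y.1 then 1 else 0

/-- The 0/1 matrix with `k`-consecutive-ones property and large determinant,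
in block coordinates. -/
noncomputable def AmAux {k : ℕ} (m : ℕ) (H : Matrix (Fin k) (Fin k) ℝ) :
    Matrix (Fin k × Fin (m + 1)) (Fin k × Fin (m + 1)) ℝ :=
  LmAux m H * UmAux k m

variable {k m : ℕ}

lemma AmAux_apply (H : Matrix (Fin k) (Fin k) ℝ)
    (hH1 : ∀ i j, H i j = 1 ∨ H i j = -1) (x y : Fin k × Fin (m + 1)) :
    AmAux m H x y =
      if (x.2 : ℕ) = 0 then (if x.1 = y.1 then 1 else 0)
      else if (y.2 : ℕ) + 1 = (x.2 : ℕ) then PmAux H x.1 y.1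
      else if (x.2 : ℕ) ≤ (y.2 : ℕ) then 1 - PmAux H x.1 y.1 else 0 := by
  classical
  rw [AmAux, Matrix.mul_apply]
  rcases Nat.eq_zero_or_pos (x.2 : ℕ) with hx | hx
  · rw [if_pos hx]
    have hsum : ∀ z : Fin k × Fin (m + 1),
        LmAux m H x z * UmAux k m z y =
        if z = (y.1, (0 : Fin (m + 1))) then (if x.1 = y.1 then 1 else 0) else 0 := by
      rintro ⟨u, l⟩
      simp only [LmAux, UmAux, hx, if_pos rfl, Prod.mk.injEq]
      by_cases hu : u = y.1
      · subst hu
        by_cases hl : (l : ℕ) = 0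
        · have hl0 : l = (0 : Fin (m+1)) := by
            apply Fin.ext; simpa using hl
          simp [hl, hl0]
        · have hl0 : ¬ (l = (0 : Fin (m+1))) := by
            intro h; apply hl; rw [h]; rfl
          simp [hl, hl0]
      · have : ¬ (u = y.1 ∧ l = 0) := by tauto
        split_ifs with h1 h2 <;> simp_all
    rw [Finset.sum_congr rfl (fun z _ => hsum z), Finset.sum_ite_eq' Finset.univ]
    simp
  · have hx0 : ¬ ((x.2 : ℕ) = 0) := by omega
    rw [if_neg hx0]
    set pd : Fin (m + 1) := ⟨(x.2 : ℕ) - 1, by omega⟩ with hpd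
    have hpdv : (pd : ℕ) + 1 = (x.2 : ℕ) := by simp [hpd]; omega
    have hsum : ∀ z : Fin k × Fin (m + 1),
        LmAux m H x z * UmAux k m z y =
        (if z = (y.1, pd) then (if (pd : ℕ) ≤ (y.2 : ℕ) then PmAux H x.1 y.1 else 0) else 0)
        + (if z = (y.1, x.2) then (if (x.2 : ℕ) ≤ (y.2 : ℕ) then -(H x.1 y.1) else 0) else 0) := by
      rintro ⟨u, l⟩
      simp only [LmAux, UmAux, hx0, if_neg, Prod.mk.injEq]
      by_cases hu : u = y.1
      · subst hu
        by_cases h1 : (l : ℕ) + 1 = (x.2 : ℕ)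
        · have hl : l = pd := by apply Fin.ext; omega
          have hne : ¬ (l = x.2) := by intro h; rw [h] at h1; omega
          subst hl
          simp only [if_pos rfl, if_pos h1, true_and]
          by_cases h2 : (pd : ℕ) ≤ (y.2 : ℕ) <;> simp [h2, hne]
        · by_cases h2 : (x.2 : ℕ) = (l : ℕ)
          · have hl : l = x.2 := by apply Fin.ext; omega
            have hne : ¬ (l = pd) := by intro h; rw [h] at h2; omega
            subst hl
            simp only [if_neg h1, if_pos rfl, true_and]
            by_cases h3 : ((x.2 : ℕ)) ≤ (y.2 : ℕ) <;> simp [h3, hne, h2]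
          · have hne1 : ¬ (l = pd) := by intro h; apply h1; rw [h]; exact hpdv
            have hne2 : ¬ (l = x.2) := by intro h; apply h2; rw [h]
            simp [h1, h2, hne1, hne2]
      · have h1 : ¬ (u = y.1 ∧ l = pd) := by tauto
        have h2 : ¬ (u = y.1 ∧ l = x.2) := by tauto
        split_ifs with h3 h4 <;> simp_all
    rw [Finset.sum_congr rfl (fun z _ => hsum z), Finset.sum_add_distrib,
      Finset.sum_ite_eq' Finset.univ, Finset.sum_ite_eq' Finset.univ]
    simp only [Finset.mem_univ, if_true]
    by_cases hc1 : (y.2 : ℕ) + 1 = (x.2 : ℕ)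
    · have h1 : (pd : ℕ) ≤ (y.2 : ℕ) := by omega
      have h2 : ¬ ((x.2 : ℕ) ≤ (y.2 : ℕ)) := by omega
      simp [hc1, h1, h2]
    · rw [if_neg hc1]
      by_cases hc2 : (x.2 : ℕ) ≤ (y.2 : ℕ)
      · have h1 : (pd : ℕ) ≤ (y.2 : ℕ) := by omega
        rw [if_pos hc2, if_pos h1, if_pos hc2]
        rcases hH1 x.1 y.1 with h | h <;> norm_num [PmAux, h]
      · have h1 : ¬ ((pd : ℕ) ≤ (y.2 : ℕ)) := by omega
        simp [hc2, h1]

lemma det_UmAux : (UmAux k m).det = 1 := by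
  classical
  have hbt : (UmAux k m).BlockTriangular (fun x => (x.2 : ℕ)) := by
    intro x y h
    have h' : (y.2 : ℕ) < (x.2 : ℕ) := h
    simp only [UmAux]
    rw [if_neg]
    rintro ⟨h1, -⟩; omega
  rw [hbt.det]
  apply Finset.prod_eq_one
  intro a _
  have : (UmAux k m).toSquareBlock (fun x => (x.2 : ℕ)) a = 1 := by
    ext ⟨x, hxa⟩ ⟨y, hya⟩
    have hxa' : (x.2 : ℕ) = a := hxa
    have hya' : (y.2 : ℕ) = a := hya
    simp only [Matrix.toSquareBlock_def, Matrix.of_apply, UmAux, Matrix.one_apply]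
    by_cases h : x.1 = y.1
    · have hxy : (⟨x, hxa⟩ : {p // (fun x : Fin k × Fin (m+1) => (x.2 : ℕ)) p = a}) = ⟨y, hya⟩ := by
        apply Subtype.ext
        show x = y
        exact Prod.ext h (Fin.ext (by omega))
      rw [if_pos ⟨by omega, h⟩, if_pos hxy]
    · have hxy : (⟨x, hxa⟩ : {p // (fun x : Fin k × Fin (m+1) => (x.2 : ℕ)) p = a}) ≠ ⟨y, hya⟩ := by
        intro hxy
        apply h
        have hv : x = y := Subtype.mk_eq_mk.mp hxy
        rw [hv]
      rw [if_neg (by tauto), if_neg hxy]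
  rw [this, Matrix.det_one]

lemma det_LmAux_abs (H : Matrix (Fin k) (Fin k) ℝ) (hk : 0 < k) :
    |(LmAux m H).det| = |H.det| ^ m := by
  classical
  rw [← Matrix.det_transpose]
  have hbt : (LmAux m H)ᵀ.BlockTriangular (fun x => (x.2 : ℕ)) := by
    intro x y h
    have h' : (y.2 : ℕ) < (x.2 : ℕ) := h
    simp only [Matrix.transpose_apply, LmAux]
    split_ifs with h2 h3 h4 <;> first | rfl | omega
  rw [hbt.det]
  have himg : Finset.univ.image (fun x : Fin k × Fin (m+1) => (x.2 : ℕ)) = Finset.range (m+1) := by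
    ext a
    simp only [Finset.mem_image, Finset.mem_univ, true_and, Finset.mem_range]
    constructor
    · rintro ⟨x, rfl⟩; exact x.2.isLt
    · intro ha
      exact ⟨(⟨0, hk⟩, ⟨a, ha⟩), rfl⟩
  rw [himg]
  have h0 : ((LmAux m H)ᵀ.toSquareBlock (fun x => (x.2 : ℕ)) 0) = 1 := by
    ext ⟨x, hxa⟩ ⟨y, hya⟩
    have hxa' : (x.2 : ℕ) = 0 := hxa
    have hya' : (y.2 : ℕ) = 0 := hya
    simp only [Matrix.toSquareBlock_def, Matrix.of_apply, Matrix.transpose_apply, LmAux,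
      Matrix.one_apply]
    rw [if_pos hya']
    by_cases h : y.1 = x.1
    · have hxy : (⟨x, hxa⟩ : {p // (fun x : Fin k × Fin (m+1) => (x.2 : ℕ)) p = 0}) = ⟨y, hya⟩ := by
        apply Subtype.ext
        show x = y
        exact Prod.ext h.symm (Fin.ext (by omega))
      rw [if_pos ⟨hxa', h⟩, if_pos hxy]
    · have hxy : (⟨x, hxa⟩ : {p // (fun x : Fin k × Fin (m+1) => (x.2 : ℕ)) p = 0}) ≠ ⟨y, hya⟩ := by
        intro hxy
        apply h
        have hv : x = y := Subtype.mk_eq_mk.mp hxy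
        rw [hv]
      rw [if_neg (by tauto), if_neg hxy]
  have hs : ∀ a : ℕ, a + 1 < m + 1 →
      ((LmAux m H)ᵀ.toSquareBlock (fun x => (x.2 : ℕ)) (a+1)).det = ((-H)ᵀ).det := by
    intro a ha
    let e : {x : Fin k × Fin (m+1) // (fun x : Fin k × Fin (m+1) => (x.2 : ℕ)) x = (a+1)} ≃ Fin k :=
      { toFun := fun x => x.1.1
        invFun := fun t => ⟨(t, ⟨a+1, ha⟩), rfl⟩
        left_inv := by
          rintro ⟨⟨t, l⟩, hl⟩
          have hl' : (l : ℕ) = a + 1 := hl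
          apply Subtype.ext
          show (t, (⟨a+1, ha⟩ : Fin (m+1))) = (t, l)
          exact Prod.ext rfl (Fin.ext (by simpa using hl'.symm))
        right_inv := fun t => rfl }
    have heq : ((LmAux m H)ᵀ.toSquareBlock (fun x => (x.2 : ℕ)) (a+1)) =
        ((-H)ᵀ).submatrix e e := by
      ext ⟨x, hxa⟩ ⟨y, hya⟩
      have hxa' : (x.2 : ℕ) = a + 1 := hxa
      have hya' : (y.2 : ℕ) = a + 1 := hya
      simp only [Matrix.toSquareBlock_def, Matrix.of_apply, Matrix.transpose_apply, LmAux,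
        Matrix.submatrix_apply, Matrix.neg_apply]
      rw [if_neg (by omega), if_neg (by omega), if_pos (by omega)]
      show -H y.1 x.1 = -H ((⟨y, hya⟩ : {x : Fin k × Fin (m+1) // (fun x : Fin k × Fin (m+1) => (x.2 : ℕ)) x = (a+1)}).1.1) ((⟨x, hxa⟩ : {x : Fin k × Fin (m+1) // (fun x : Fin k × Fin (m+1) => (x.2 : ℕ)) x = (a+1)}).1.1)
      rfl
    rw [heq, Matrix.det_submatrix_equiv_self]
  rw [Finset.prod_range_succ']
  rw [h0, Matrix.det_one, mul_one]
  rw [Finset.prod_congr rfl (fun a haa => hs a (by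
    simp only [Finset.mem_range] at haa; omega))]
  rw [Finset.prod_const, Finset.card_range]
  rw [abs_pow, Matrix.det_transpose, Matrix.det_neg, abs_mul, abs_pow, abs_neg, abs_one,
    one_pow, one_mul]

lemma det_AmAux_abs (H : Matrix (Fin k) (Fin k) ℝ) (hk : 0 < k) :
    |(AmAux m H).det| = |H.det| ^ m := by
  rw [AmAux, Matrix.det_mul, det_UmAux, mul_one, det_LmAux_abs H hk]

lemma grp_eq {m t t' jb a b : ℕ} (hjb : jb ≤ m) (hb : b ≤ m)
    (h1 : a + (m+1)*t' ≤ jb + (m+1)*t) (h2 : jb + (m+1)*t ≤ b + (m+1)*t') : t' = t := by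
  have ht1 : t' ≤ t := by
    by_contra hlt
    push_neg at hlt
    have h3 : (m+1) * (t+1) ≤ (m+1) * t' := Nat.mul_le_mul_left _ hlt
    rw [Nat.mul_succ] at h3
    have := le_trans (Nat.add_le_add_left h3 a) h1
    have h4 : (m+1) * t ≤ (m+1) * t' := Nat.mul_le_mul_left _ (le_of_lt hlt)
    linarith
  have ht2 : t ≤ t' := by
    by_contra hlt
    push_neg at hlt
    have h3 : (m+1) * (t'+1) ≤ (m+1) * t := Nat.mul_le_mul_left _ hlt
    rw [Nat.mul_succ] at h3
    have := le_trans (Nat.add_le_add_left h3 jb) h2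
    linarith
  omega

end AuxDefs

/-- If a Hadamard matrix of order `k` exists and `k ∣ n`, then there is an `n × n`
0/1-matrix with the `k`-consecutive ones property whose determinant has absolute value
`k^((n-k)/2)`. -/
theorem exists_kConsecutiveOnes_det_eq (k n : ℕ) (hk : 0 < k) (hn : 0 < n)
    (hdvd : k ∣ n)
    (hH : ∃ H : Matrix (Fin k) (Fin k) ℝ,
      (∀ i j, H i j = 1 ∨ H i j = -1) ∧ H * Hᵀ = (k : ℝ) • 1) :
    ∃ A : Matrix (Fin n) (Fin n) ℝ,
      (∀ i j, A i j = 0 ∨ A i j = 1) ∧ KConsecutiveOnes A k ∧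
      |A.det| = (k : ℝ) ^ (((n : ℝ) - (k : ℝ)) / 2) := by
  classical
  obtain ⟨H, hH1, hH2⟩ := hH
  obtain ⟨q, hq⟩ := hdvd
  have hq1 : 1 ≤ q := by
    rcases Nat.eq_zero_or_pos q with h | h
    · subst h; omega
    · exact h
  obtain ⟨m, rfl⟩ : ∃ m, q = m + 1 := ⟨q - 1, by omega⟩
  have hkm : n = k * (m + 1) := hq
  set ψ : Fin n ≃ Fin k × Fin (m+1) := (finCongr hkm).trans finProdFinEquiv.symm with hψ
  set A : Matrix (Fin n) (Fin n) ℝ := (AmAux m H).submatrix ψ ψ with hA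
  -- position formula
  have hpos : ∀ j : Fin n, (j : ℕ) = ((ψ j).2 : ℕ) + (m+1) * ((ψ j).1 : ℕ) := by
    intro j
    conv_lhs => rw [← ψ.symm_apply_apply j]
    rw [hψ]
    simp [Equiv.symm_trans_apply, finProdFinEquiv]
  refine ⟨A, ?_, ?_, ?_⟩
  · -- 0/1 entries
    intro i j
    rw [hA, Matrix.submatrix_apply, AmAux_apply H hH1]
    rcases hH1 (ψ i).1 (ψ j).1 with h | h <;>
      split_ifs <;> norm_num [PmAux, h]
  · -- k-consecutive ones
    intro i
    set s : Fin k := (ψ i).1 with hs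
    set ib : Fin (m+1) := (ψ i).2 with hib
    rcases Nat.eq_zero_or_pos (ib : ℕ) with hib0 | hib0
    · -- glue row: one single interval
      refine ⟨{((m+1) * (s : ℕ), (m+1) * (s : ℕ) + m)}, by rw [Finset.card_singleton]; omega, ?_⟩
      intro j
      set t : Fin k := (ψ j).1 with ht
      set jb : Fin (m+1) := (ψ j).2 with hjb
      have hj : (j : ℕ) = (jb : ℕ) + (m+1) * (t : ℕ) := hpos j
      have hjbm : (jb : ℕ) ≤ m := by omega
      rw [hA, Matrix.submatrix_apply, AmAux_apply H hH1, ← hs, ← hib, ← ht, ← hjb,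
        if_pos hib0]
      simp only [Finset.mem_singleton]
      constructor
      · intro hval
        have hst : s = t := by
          by_contra hc
          rw [if_neg hc] at hval
          norm_num at hval
        refine ⟨((m+1) * (s : ℕ), (m+1) * (s : ℕ) + m), rfl, ?_, ?_⟩
        · rw [hj, hst]; omega
        · rw [hj, hst]; omega
      · rintro ⟨p, rfl, hp1, hp2⟩
        rw [hj] at hp1 hp2
        have : (s : ℕ) = (t : ℕ) := by
          refine grp_eq (a := 0) hjbm (le_refl m) (by omega) (by omega)
        have hst : s = t := Fin.ext this
        rw [if_pos hst]
    · -- staircase row: one interval per offset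
      set f : Fin k → ℕ × ℕ := fun t =>
        if H s t = 1 then (((ib : ℕ) - 1) + (m+1) * (t : ℕ), ((ib : ℕ) - 1) + (m+1) * (t : ℕ))
        else ((ib : ℕ) + (m+1) * (t : ℕ), m + (m+1) * (t : ℕ)) with hf
      refine ⟨Finset.image f Finset.univ, le_trans (Finset.card_image_le) (by simp), ?_⟩
      intro j
      set t : Fin k := (ψ j).1 with ht
      set jb : Fin (m+1) := (ψ j).2 with hjb
      have hj : (j : ℕ) = (jb : ℕ) + (m+1) * (t : ℕ) := hpos j
      have hjbm : (jb : ℕ) ≤ m := by omega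
      have hibm : (ib : ℕ) ≤ m := by omega
      have hib0' : ¬ ((ib : ℕ) = 0) := by omega
      rw [hA, Matrix.submatrix_apply, AmAux_apply H hH1, ← hs, ← hib, ← ht, ← hjb,
        if_neg hib0']
      simp only [Finset.mem_image, Finset.mem_univ, true_and, exists_exists_eq_and]
      constructor
      · intro hval
        refine ⟨t, ?_⟩
        rcases hH1 s t with h | h
        · -- H s t = 1 : the only 1 in this group is at jb+1 = ib
          have hP : PmAux H s t = 1 := by simp [PmAux, h]
          have hcase : (jb : ℕ) + 1 = (ib : ℕ) := by
            by_contra hc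
            rw [if_neg hc] at hval
            rw [hP] at hval
            split_ifs at hval <;> norm_num at hval
          rw [hf]
          simp only [h, if_pos]
          constructor <;> (rw [hj]; omega)
        · -- H s t = -1 : ones in this group are at jb ≥ ib
          have hP : PmAux H s t = 0 := by norm_num [PmAux, h]
          have hcase : (ib : ℕ) ≤ (jb : ℕ) := by
            by_contra hc
            have h1 : ¬ ((jb : ℕ) + 1 = (ib : ℕ)) := by
              intro he
              rw [if_pos he, hP] at hval
              norm_num at hval
            rw [if_neg h1, if_neg (by omega)] at hval
            norm_num at hval
          rw [hf]
          have hne : ¬ (H s t = 1) := by rw [h]; norm_num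
          simp only [hne, if_false]
          constructor <;> (rw [hj]; omega)
      · rintro ⟨t', hp1, hp2⟩
        -- first show t' = t
        have hbnds : ∃ a b : ℕ, a ≤ m ∧ b ≤ m ∧
            (f t').1 = a + (m+1) * (t' : ℕ) ∧ (f t').2 = b + (m+1) * (t' : ℕ) := by
          rw [hf]
          by_cases h : H s t' = 1
          · exact ⟨(ib : ℕ) - 1, (ib : ℕ) - 1, by omega, by omega, by simp [h], by simp [h]⟩
          · exact ⟨(ib : ℕ), m, hibm, le_refl m, by simp [h], by simp [h]⟩
        obtain ⟨a, b, ham, hbm, hfa, hfb⟩ := hbnds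
        have hp1' : a + (m+1) * (t' : ℕ) ≤ (jb : ℕ) + (m+1) * (t : ℕ) := by
          rw [← hfa, ← hj]; exact hp1
        have hp2' : (jb : ℕ) + (m+1) * (t : ℕ) ≤ b + (m+1) * (t' : ℕ) := by
          rw [← hfb, ← hj]; exact hp2
        have htt : (t' : ℕ) = (t : ℕ) := grp_eq hjbm hbm hp1' hp2'
        have htt' : t' = t := Fin.ext htt
        rw [htt'] at hp1 hp2
        rw [hj] at hp1 hp2
        rcases hH1 s t with h | h
        · have hP : PmAux H s t = 1 := by simp [PmAux, h]
          simp only [hf, h, if_pos] at hp1 hp2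
          have hcase : (jb : ℕ) + 1 = (ib : ℕ) := by omega
          rw [if_pos hcase, hP]
        · have hP : PmAux H s t = 0 := by norm_num [PmAux, h]
          have hne : ¬ (H s t = 1) := by rw [h]; norm_num
          simp only [hf, hne, if_false] at hp1 hp2
          have hcase : (ib : ℕ) ≤ (jb : ℕ) := by omega
          have h1 : ¬ ((jb : ℕ) + 1 = (ib : ℕ)) := by omega
          rw [if_neg h1, if_pos hcase, hP]
          norm_num
  · -- determinant
    have hdet : A.det = (AmAux m H).det := Matrix.det_submatrix_equiv_self ψ (AmAux m H)
    rw [hdet, det_AmAux_abs H hk]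
    -- numeric identity
    have hdet2 : H.det ^ 2 = (k:ℝ) ^ k := by
      have h1 : (H * Hᵀ).det = H.det ^ 2 := by
        rw [Matrix.det_mul, Matrix.det_transpose]; ring
      have h2 : ((k:ℝ) • (1 : Matrix (Fin k) (Fin k) ℝ)).det = (k:ℝ) ^ k := by
        rw [Matrix.det_smul, Matrix.det_one, mul_one, Fintype.card_fin]
      rw [← h1, hH2, h2]
    have hk0 : (0:ℝ) ≤ (k:ℝ) := by positivity
    have hsq : (|H.det| ^ m) ^ 2 = (k:ℝ) ^ (k * m) := by
      rw [← pow_mul, mul_comm m 2, pow_mul, sq_abs, hdet2, ← pow_mul]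
    have htsq : ((k : ℝ) ^ (((n : ℝ) - (k : ℝ)) / 2)) ^ 2 = (k:ℝ) ^ (k * m) := by
      rw [← Real.rpow_natCast ((k : ℝ) ^ (((n : ℝ) - (k : ℝ)) / 2)) 2,
        ← Real.rpow_mul hk0]
      have : ((n : ℝ) - (k : ℝ)) / 2 * (2:ℕ) = ((k * m : ℕ) : ℝ) := by
        push_cast [hkm]; ring
      rw [this, Real.rpow_natCast]
    have h1 : |H.det| ^ m = Real.sqrt (((k:ℝ) ^ (k*m))) := by
      rw [← hsq, Real.sqrt_sq (by positivity)]
    have h2 : (k : ℝ) ^ (((n : ℝ) - (k : ℝ)) / 2) = Real.sqrt (((k:ℝ) ^ (k*m))) := by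
      rw [← htsq, Real.sqrt_sq (Real.rpow_nonneg hk0 _)]
    rw [h1, h2]
end

section
/- If T is a tree on n vertices and 𝒫 is a set of n−1 paths in T, then the (n−1)×(n−1) path-edge incidence matrix A(𝒫,T) satisfies |det(A(𝒫,T))| ≤ 2^(n−1). -/
open scoped Classical
open Matrix Finset

/-- A row-set is "vertical": empty, or a top-segment (by depth) of some chain. -/
def VertRow {ι : Type} (depth : ι → ℕ) (chain : ι → Finset ι) (s : Finset ι) : Prop :=
  s = ∅ ∨ ∃ e ∈ s, ∃ d, s = (chain e).filter (fun x => d ≤ depth x)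

theorem abstract_det_le_one :
    ∀ (N : ℕ) (ι : Type) [Fintype ι] [DecidableEq ι], Fintype.card ι ≤ N →
    ∀ (depth : ι → ℕ) (chain : ι → Finset ι),
    (∀ e, e ∈ chain e) →
    (∀ e x, x ∈ chain e → depth x ≤ depth e) →
    (∀ e x y, x ∈ chain e → y ∈ chain e → depth x = depth y → x = y) →
    (∀ e x, x ∈ chain e → chain x = (chain e).filter (fun y => depth y ≤ depth x)) →
    ∀ (M : Matrix ι ι ℝ),
    (∀ i, ∃ s, VertRow depth chain s ∧ ∀ j, M i j = if j ∈ s then 1 else 0) →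
    |M.det| ≤ 1 := by
  intro N
  induction N with
  | zero =>
    intro ι _ _ hcard depth chain _ _ _ _ M _
    haveI : IsEmpty ι := Fintype.card_eq_zero_iff.mp (Nat.le_zero.mp hcard)
    simp [Matrix.det_isEmpty]
  | succ N IH =>
    intro ι _ _ hcard depth chain hmem hle hinj hpre
    by_cases hc : Fintype.card ι ≤ N
    · exact IH ι hc depth chain hmem hle hinj hpre
    have hcpos : 0 < Fintype.card ι := by omega
    haveI hne : Nonempty ι := Fintype.card_pos_iff.mp hcpos
    obtain ⟨e, -, hemax⟩ := Finset.exists_max_image Finset.univ depth univ_nonempty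
    -- any vertical set containing e is a top filter of `chain e`
    have htop : ∀ s : Finset ι, VertRow depth chain s → e ∈ s →
        ∃ d, s = (chain e).filter (fun x => d ≤ depth x) := by
      intro s hv hes
      rcases hv with rfl | ⟨b, hbs, d, rfl⟩
      · simp at hes
      have hbe : b = e := by
        have h1 : e ∈ chain b := (Finset.mem_filter.mp hes).1
        refine (hinj b e b h1 (hmem b) ?_).symm
        exact le_antisymm (hle b e h1) (hemax b (Finset.mem_univ b))
      exact ⟨d, by rw [hbe]⟩
    suffices inner : ∀ (k : ℕ) (M : Matrix ι ι ℝ),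
        (∀ i, ∃ s, VertRow depth chain s ∧ ∀ j, M i j = if j ∈ s then 1 else 0) →
        (Finset.univ.filter (fun i => M i e ≠ 0)).card ≤ k → |M.det| ≤ 1 by
      intro M hM
      exact inner _ M hM le_rfl
    intro k
    induction k with
    | zero =>
      intro M hM hk
      have : ∀ i, M i e = 0 := by
        intro i
        by_contra hi
        have : i ∈ Finset.univ.filter (fun i => M i e ≠ 0) := by
          simp [hi]
        have := Finset.card_pos.mpr ⟨i, this⟩
        omega
      rw [Matrix.det_eq_zero_of_column_eq_zero e this]
      simp
    | succ k ihk =>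
      intro M hM hk
      by_cases h1 : (Finset.univ.filter (fun i => M i e ≠ 0)).card ≤ 1
      · -- elimination branch
        rcases Nat.lt_or_ge (Finset.univ.filter (fun i => M i e ≠ 0)).card 1 with h0 | hone
        · -- zero column
          have hz : ∀ i, M i e = 0 := by
            intro i
            by_contra hi
            have : i ∈ Finset.univ.filter (fun i => M i e ≠ 0) := by simp [hi]
            have := Finset.card_pos.mpr ⟨i, this⟩
            omega
          rw [Matrix.det_eq_zero_of_column_eq_zero e hz]; simp
        · have hFcard : (Finset.univ.filter (fun i => M i e ≠ 0)).card = 1 :=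
            le_antisymm h1 hone
          obtain ⟨r, hFr⟩ := Finset.card_eq_one.mp hFcard
          have hre : M r e ≠ 0 := by
            have : r ∈ Finset.univ.filter (fun i => M i e ≠ 0) := by rw [hFr]; simp
            exact (Finset.mem_filter.mp this).2
          have hzero : ∀ i, i ≠ r → M i e = 0 := by
            intro i hi
            by_contra hcon
            have : i ∈ Finset.univ.filter (fun i => M i e ≠ 0) := by simp [hcon]
            rw [hFr, Finset.mem_singleton] at this
            exact hi this
          have hMre : M r e = 1 := by
            obtain ⟨s, hv, hr⟩ := hM r
            have hes : e ∈ s := by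
              by_contra hcon
              exact hre (by rw [hr e, if_neg hcon])
            rw [hr e, if_pos hes]
          set σ := Equiv.swap r e with hσ
          set Nm := M.submatrix σ id with hNm
          have hdetN : Nm.det = Equiv.Perm.sign σ * M.det := Matrix.det_permute σ M
          have habs : |M.det| = |Nm.det| := by
            rw [hdetN]
            rcases Int.units_eq_one_or (Equiv.Perm.sign σ) with h | h <;> rw [h] <;> simp
          set f : ι → ℕ := fun x => if x = e then 0 else 1 with hf
          have hfe : f e = 0 := by simp [hf]
          have hfne : ∀ x, x ≠ e → f x = 1 := fun x hx => by simp [hf, hx]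
          have hfle : ∀ x, f x ≤ 1 := by
            intro x
            rcases eq_or_ne x e with h | h
            · rw [h, hfe]; omega
            · rw [hfne x h]
          have hswap_ne : ∀ x : ι, x ≠ e → σ x ≠ r := by
            intro x hx hcon
            apply hx
            have : σ (σ x) = σ r := congrArg σ hcon
            rwa [Equiv.swap_apply_self, Equiv.swap_apply_left] at this
          have hBT : Nm.BlockTriangular f := by
            intro i j hij
            have hje : j = e := by
              by_contra hcon
              have := hfle i
              rw [hfne j hcon] at hij
              omega
            have hie : i ≠ e := by
              intro hcon
              rw [hje, hcon] at hij
              exact lt_irrefl _ hij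
            rw [hje]
            show M (σ i) e = 0
            exact hzero (σ i) (hswap_ne i hie)
          rw [habs, hBT.det, Finset.abs_prod]
          apply Finset.prod_le_one (fun a _ => abs_nonneg _)
          intro a ha
          have ha01 : a = 0 ∨ a = 1 := by
            obtain ⟨x, -, hx⟩ := Finset.mem_image.mp ha
            rcases eq_or_ne x e with h | h
            · left; rw [← hx, h, hfe]
            · right; rw [← hx, hfne x h]
          rcases ha01 with rfl | rfl
          · -- singleton block {e}
            haveI hsub0 : Subsingleton {i // f i = 0} := by
              constructor
              rintro ⟨x, hx⟩ ⟨y, hy⟩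
              have hx' : x = e := by
                by_contra hcon
                rw [hfne x hcon] at hx
                omega
              have hy' : y = e := by
                by_contra hcon
                rw [hfne y hcon] at hy
                omega
              subst hx'; subst hy'; rfl
            rw [Matrix.det_eq_elem_of_subsingleton _ (⟨e, hfe⟩ : {i // f i = 0})]
            have heq : (Nm.toSquareBlock f 0) ⟨e, hfe⟩ ⟨e, hfe⟩ = M r e := by
              rw [Matrix.toSquareBlock_def]
              simp only [Matrix.of_apply, hNm, Matrix.submatrix_apply, id]
              rw [hσ, Equiv.swap_apply_right]
            rw [heq, hMre]
            simp
          · -- big block : apply outer IH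
            have hcard' : Fintype.card {i // f i = 1} ≤ N := by
              have h2 : Fintype.card {i // f i = 1} =
                  (Finset.univ.filter (fun i => f i = 1)).card := Fintype.card_subtype _
              have h3 : (Finset.univ.filter (fun i => f i = 1)) = Finset.univ.erase e := by
                ext x
                simp only [Finset.mem_filter, Finset.mem_univ, true_and, Finset.mem_erase,
                  and_true]
                constructor
                · intro hx hcon
                  rw [hcon, hfe] at hx
                  omega
                · exact hfne x
              have h3' := congrArg Finset.card h3
              have h4 := Finset.card_erase_of_mem (Finset.mem_univ e)
              have h5 : (Finset.univ : Finset ι).card = Fintype.card ι := Finset.card_univ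
              omega
            have hval_ne : ∀ x : {i // f i = 1}, (x : ι) ≠ e := by
              intro x hcon
              have hx := x.prop
              rw [hcon] at hx
              exact zero_ne_one (hfe.symm.trans hx)
            have hmem1 : ∀ x : {i // f i = 1},
                x ∈ (chain (x : ι)).subtype (fun y => f y = 1) := by
              intro x
              rw [Finset.mem_subtype]
              exact hmem x.val
            have hle1 : ∀ (x y : {i // f i = 1}),
                y ∈ (chain (x : ι)).subtype (fun y => f y = 1) →
                depth (y : ι) ≤ depth (x : ι) := by
              intro x y hy
              rw [Finset.mem_subtype] at hy
              exact hle x.val y.val hy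
            have hinj1 : ∀ (x y z : {i // f i = 1}),
                y ∈ (chain (x : ι)).subtype (fun y => f y = 1) →
                z ∈ (chain (x : ι)).subtype (fun y => f y = 1) →
                depth (y : ι) = depth (z : ι) → y = z := by
              intro x y z hy hz hd
              rw [Finset.mem_subtype] at hy hz
              exact Subtype.ext (hinj x.val y.val z.val hy hz hd)
            have hpre1 : ∀ (x y : {i // f i = 1}),
                y ∈ (chain (x : ι)).subtype (fun y => f y = 1) →
                (chain (y : ι)).subtype (fun y => f y = 1) =
                  ((chain (x : ι)).subtype (fun y => f y = 1)).filter
                    (fun z : {i // f i = 1} => depth (z : ι) ≤ depth (y : ι)) := by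
              intro x y hy
              rw [Finset.mem_subtype] at hy
              ext z
              simp only [Finset.mem_subtype, Finset.mem_filter]
              rw [hpre x.val y.val hy, Finset.mem_filter]
            have hrows : ∀ i : {i // f i = 1},
                ∃ s : Finset {i // f i = 1},
                  VertRow (fun x : {i // f i = 1} => depth (x : ι))
                    (fun x : {i // f i = 1} => (chain (x : ι)).subtype (fun y => f y = 1)) s ∧
                  ∀ j, (Nm.toSquareBlock f 1) i j = if j ∈ s then 1 else 0 := by
              intro i
              have hie : (i : ι) ≠ e := hval_ne i
              have hyr : σ (i : ι) ≠ r := hswap_ne (i : ι) hie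
              obtain ⟨s, hv, hrw⟩ := hM (σ (i : ι))
              have hes : e ∉ s := by
                intro hcon
                have h6 := hzero (σ (i : ι)) hyr
                rw [hrw e, if_pos hcon] at h6
                exact one_ne_zero h6
              refine ⟨s.subtype (fun y => f y = 1), ?_, ?_⟩
              · rcases hv with rfl | ⟨b, hbs, d, hsdef⟩
                · left
                  ext z
                  simp
                · right
                  have hbe : b ≠ e := fun hcon => hes (hcon ▸ hbs)
                  refine ⟨⟨b, hfne b hbe⟩, ?_, d, ?_⟩
                  · rw [Finset.mem_subtype]
                    exact hbs
                  · ext z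
                    simp only [Finset.mem_subtype, Finset.mem_filter, hsdef]
              · intro j
                rw [Matrix.toSquareBlock_def]
                simp only [Matrix.of_apply, hNm, Matrix.submatrix_apply, id]
                rw [hrw (j : ι)]
                simp [Finset.mem_subtype]
            exact IH {i // f i = 1} hcard' (fun x : {i // f i = 1} => depth (x : ι))
              (fun x : {i // f i = 1} => (chain (x : ι)).subtype (fun y => f y = 1))
              hmem1 hle1 hinj1 hpre1 (Nm.toSquareBlock f 1) hrows
      · -- row reduction
        push_neg at h1
        obtain ⟨r1, hr1, r2, hr2, hr12⟩ := Finset.one_lt_card.mp h1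
        simp only [Finset.mem_filter] at hr1 hr2
        obtain ⟨s1, hv1, hrow1⟩ := hM r1
        obtain ⟨s2, hv2, hrow2⟩ := hM r2
        have he1 : e ∈ s1 := by
          by_contra h; exact hr1.2 (by rw [hrow1 e, if_neg h])
        have he2 : e ∈ s2 := by
          by_contra h; exact hr2.2 (by rw [hrow2 e, if_neg h])
        obtain ⟨d1, hs1⟩ := htop s1 hv1 he1
        obtain ⟨d2, hs2⟩ := htop s2 hv2 he2
        -- wlog-free: handle both orders via a helper
        have key : ∀ (ra rb : ι), ra ≠ rb → M ra e ≠ 0 → M rb e ≠ 0 →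
            ∀ (sa sb : Finset ι) (da db : ℕ),
            sa = (chain e).filter (fun x => da ≤ depth x) →
            sb = (chain e).filter (fun x => db ≤ depth x) →
            (∀ j, M ra j = if j ∈ sa then 1 else 0) →
            (∀ j, M rb j = if j ∈ sb then 1 else 0) →
            db ≤ da → |M.det| ≤ 1 := by
          intro ra rb hab hae hbe sa sb da db hsa hsb hra hrb hdle
          have hsub : sa ⊆ sb := by
            rw [hsa, hsb]
            intro x hx
            rw [Finset.mem_filter] at hx ⊢
            exact ⟨hx.1, le_trans hdle hx.2⟩
          by_cases heq : sa = sb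
          · have : M ra = M rb := by
              funext j; rw [hra j, hrb j, heq]
            rw [Matrix.det_zero_of_row_eq hab this]; simp
          -- proper: subtract row ra from row rb
          have hde : e ∈ sa := by
            by_contra h; exact hae (by rw [hra e, if_neg h])
          set M' := M.updateRow rb (M rb + (-1 : ℝ) • M ra) with hM'def
          have hdet : M'.det = M.det :=
            Matrix.det_updateRow_add_smul_self M (Ne.symm hab) (-1)
          have hrow' : ∀ j, M' rb j = if j ∈ sb \ sa then 1 else 0 := by
            intro j
            have : M' rb j = M rb j - M ra j := by
              simp [hM'def, Matrix.updateRow_self, sub_eq_add_neg]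
            rw [this, hra j, hrb j]
            by_cases hja : j ∈ sa
            · rw [if_pos hja, if_pos (hsub hja), if_neg (by simp [hja])]; ring
            · by_cases hjb : j ∈ sb
              · rw [if_pos hjb, if_neg hja, if_pos (Finset.mem_sdiff.mpr ⟨hjb, hja⟩)]; ring
              · rw [if_neg hja, if_neg hjb, if_neg (by simp [hjb])]; ring
          have hvert' : VertRow depth chain (sb \ sa) := by
            by_cases hemp : (sb \ sa) = ∅
            · exact Or.inl hemp
            right
            obtain ⟨b, hb, hbmax⟩ := Finset.exists_max_image (sb \ sa) depth
              (Finset.nonempty_iff_ne_empty.mpr hemp)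
            refine ⟨b, hb, db, ?_⟩
            have hbchain : b ∈ chain e := by
              have := (Finset.mem_sdiff.mp hb).1
              rw [hsb] at this
              exact (Finset.mem_filter.mp this).1
            have hbda : ¬ da ≤ depth b := by
              intro hcon
              have hbsa : b ∈ sa := by
                rw [hsa, Finset.mem_filter]; exact ⟨hbchain, hcon⟩
              exact (Finset.mem_sdiff.mp hb).2 hbsa
            rw [hpre e b hbchain]
            ext x
            simp only [Finset.mem_sdiff, Finset.mem_filter, hsa, hsb]
            constructor
            · rintro ⟨⟨hx1, hx2⟩, hx3⟩
              refine ⟨⟨hx1, ?_⟩, hx2⟩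
              have : ¬ da ≤ depth x := fun hcon => hx3 ⟨hx1, hcon⟩
              have := hbmax x (by rw [hsb, hsa]; simp [Finset.mem_sdiff, Finset.mem_filter, hx1, hx2, this])
              exact this
            · rintro ⟨⟨hx1, hx2⟩, hx3⟩
              refine ⟨⟨hx1, hx3⟩, ?_⟩
              rintro ⟨-, hx4⟩
              exact hbda (le_trans hx4 hx2)
          have hM'rows : ∀ i, ∃ s, VertRow depth chain s ∧ ∀ j, M' i j = if j ∈ s then 1 else 0 := by
            intro i
            by_cases hi : i = rb
            · subst hi; exact ⟨sb \ sa, hvert', hrow'⟩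
            · obtain ⟨s, hv, hr⟩ := hM i
              exact ⟨s, hv, fun j => by rw [hM'def, Matrix.updateRow_ne hi]; exact hr j⟩
          have hfilt : (Finset.univ.filter (fun i => M' i e ≠ 0)) ⊆
              (Finset.univ.filter (fun i => M i e ≠ 0)).erase rb := by
            intro i hi
            rw [Finset.mem_filter] at hi
            have hib : i ≠ rb := by
              rintro rfl
              exact hi.2 (by rw [hrow' e, if_neg (by simp [hde])])
            refine Finset.mem_erase.mpr ⟨hib, ?_⟩
            rw [Finset.mem_filter]
            refine ⟨Finset.mem_univ i, ?_⟩
            have h5 := hi.2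
            rwa [hM'def, Matrix.updateRow_ne hib] at h5
          have hcount : (Finset.univ.filter (fun i => M' i e ≠ 0)).card ≤ k := by
            have h2 := Finset.card_le_card hfilt
            have h3 : rb ∈ Finset.univ.filter (fun i => M i e ≠ 0) := by simp [hbe]
            have h4 := Finset.card_erase_of_mem h3
            omega
          rw [← hdet]
          exact ihk M' hM'rows hcount
        rcases le_total d2 d1 with hd | hd
        · exact key r1 r2 hr12 hr1.2 hr2.2 s1 s2 d1 d2 hs1 hs2 hrow1 hrow2 hd
        · exact key r2 r1 hr12.symm hr2.2 hr1.2 s2 s1 d2 d1 hs2 hs1 hrow2 hrow1 hd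


namespace TreeDetAux

variable {V : Type} [Fintype V] [DecidableEq V] {T : SimpleGraph V}

noncomputable def pw (hT : T.IsTree) (r v : V) : T.Walk r v :=
  (hT.existsUnique_path r v).choose

lemma pw_isPath (hT : T.IsTree) (r v : V) : (pw hT r v).IsPath :=
  (hT.existsUnique_path r v).choose_spec.1

lemma pw_unique (hT : T.IsTree) {r v : V} (p : T.Walk r v) (hp : p.IsPath) :
    p = pw hT r v :=
  (hT.existsUnique_path r v).choose_spec.2 p hp

noncomputable def depthV (hT : T.IsTree) (r v : V) : ℕ := (pw hT r v).length

noncomputable def DD (hT : T.IsTree) (r v : V) : Finset (Sym2 V) :=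
  (pw hT r v).edges.toFinset

noncomputable def depthE (hT : T.IsTree) (r : V) : Sym2 V → ℕ :=
  Sym2.lift ⟨fun x y => max (depthV hT r x) (depthV hT r y), fun a b => by
    simp [max_comm]⟩

noncomputable def chainE (hT : T.IsTree) (r : V) : Sym2 V → Finset (Sym2 V) :=
  Sym2.lift ⟨fun x y =>
    if depthV hT r x < depthV hT r y then DD hT r y
    else if depthV hT r y < depthV hT r x then DD hT r x else ∅, fun a b => by
    dsimp only
    rcases lt_trichotomy (depthV hT r a) (depthV hT r b) with h | h | h
    · rw [if_pos h, if_neg (by omega), if_pos h]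
    · rw [if_neg (by omega), if_neg (by omega), if_neg (by omega), if_neg (by omega)]
    · rw [if_neg (by omega), if_pos h, if_pos h]⟩

lemma pw_self (hT : T.IsTree) (r : V) : pw hT r r = SimpleGraph.Walk.nil :=
  (pw_unique hT SimpleGraph.Walk.nil (SimpleGraph.Walk.IsPath.nil)).symm

lemma DD_self (hT : T.IsTree) (r : V) : DD hT r r = ∅ := by
  rw [DD, pw_self]
  simp

lemma adj_dichotomy (hT : T.IsTree) (r : V) {a b : V} (h : T.Adj a b) :
    (depthV hT r b = depthV hT r a + 1 ∧
      (pw hT r b).edges = (pw hT r a).edges ++ [s(a, b)]) ∨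
    (depthV hT r a = depthV hT r b + 1 ∧
      (pw hT r a).edges = (pw hT r b).edges ++ [s(a, b)]) := by
  by_cases ha : a ∈ (pw hT r b).support
  · left
    have hp := pw_isPath hT r b
    have h1 : (pw hT r b).takeUntil a ha = pw hT r a :=
      pw_unique hT _ (hp.takeUntil ha)
    have hcons : (SimpleGraph.Walk.cons h SimpleGraph.Walk.nil : T.Walk a b).IsPath := by
      rw [SimpleGraph.Walk.cons_isPath_iff]
      refine ⟨SimpleGraph.Walk.IsPath.nil, ?_⟩
      simp [h.ne]
    have h2 : (pw hT r b).dropUntil a ha = SimpleGraph.Walk.cons h SimpleGraph.Walk.nil := by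
      have hq2 : ((pw hT r b).dropUntil a ha).IsPath := hp.dropUntil ha
      have := hT.IsAcyclic.path_unique ⟨_, hq2⟩ ⟨_, hcons⟩
      exact congrArg Subtype.val this
    have hspec := (pw hT r b).take_spec ha
    constructor
    · have hl := congrArg SimpleGraph.Walk.length hspec
      rw [SimpleGraph.Walk.length_append, h1, h2] at hl
      simp only [SimpleGraph.Walk.length_cons, SimpleGraph.Walk.length_nil] at hl
      unfold depthV
      omega
    · have he := congrArg SimpleGraph.Walk.edges hspec
      rw [SimpleGraph.Walk.edges_append, h1, h2] at he
      simp only [SimpleGraph.Walk.edges_cons, SimpleGraph.Walk.edges_nil] at he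
      exact he.symm
  · right
    have hp := pw_isPath hT r b
    have hq : ((pw hT r b).concat h.symm).IsPath := by
      rw [← SimpleGraph.Walk.isPath_reverse_iff, SimpleGraph.Walk.reverse_concat]
      refine SimpleGraph.Walk.IsPath.cons hp.reverse ?_
      rwa [SimpleGraph.Walk.support_reverse, List.mem_reverse]
    have h1 : (pw hT r b).concat h.symm = pw hT r a := pw_unique hT _ hq
    constructor
    · have hl := congrArg SimpleGraph.Walk.length h1
      rw [SimpleGraph.Walk.length_concat] at hl
      unfold depthV
      omega
    · have he := congrArg SimpleGraph.Walk.edges h1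
      rw [SimpleGraph.Walk.edges_concat] at he
      rw [← he, List.concat_eq_append, Sym2.eq_swap]

lemma exists_parent (hT : T.IsTree) (r : V) {v : V} (hv : v ≠ r) :
    ∃ u, T.Adj u v ∧ depthV hT r v = depthV hT r u + 1 ∧
      (pw hT r v).edges = (pw hT r u).edges ++ [s(u, v)] := by
  obtain ⟨u, h, q, hq⟩ := SimpleGraph.Walk.exists_eq_cons_of_ne hv (pw hT r v).reverse
  have hqp : q.reverse.IsPath := by
    have h0 : (pw hT r v).reverse.IsPath := (pw_isPath hT r v).reverse
    rw [hq] at h0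
    exact (h0.of_cons).reverse
  have h1 : q.reverse = pw hT r u := pw_unique hT _ hqp
  have h2 : pw hT r v = (q.reverse).concat h.symm := by
    conv_lhs => rw [← SimpleGraph.Walk.reverse_reverse (pw hT r v), hq,
      SimpleGraph.Walk.reverse_cons]
    rw [SimpleGraph.Walk.concat_eq_append]
  refine ⟨u, h.symm, ?_, ?_⟩
  · have hl := congrArg SimpleGraph.Walk.length h2
    rw [SimpleGraph.Walk.length_concat, h1] at hl
    unfold depthV
    omega
  · have he := congrArg SimpleGraph.Walk.edges h2
    rw [SimpleGraph.Walk.edges_concat, h1] at he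
    rw [he, List.concat_eq_append]

lemma master (hT : T.IsTree) (r : V) : ∀ (n : ℕ) (v : V), depthV hT r v ≤ n →
    (∀ e ∈ DD hT r v, 1 ≤ depthE hT r e ∧ depthE hT r e ≤ depthV hT r v) ∧
    (∀ e ∈ DD hT r v, chainE hT r e =
        (DD hT r v).filter (fun y => depthE hT r y ≤ depthE hT r e) ∧ e ∈ chainE hT r e) ∧
    (∀ e1 ∈ DD hT r v, ∀ e2 ∈ DD hT r v, depthE hT r e1 = depthE hT r e2 → e1 = e2) := by
  intro n
  induction n with
  | zero =>
    intro v hv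
    have h0 : (pw hT r v).edges = [] := by
      have := SimpleGraph.Walk.length_edges (pw hT r v)
      refine List.length_eq_zero_iff.mp ?_
      unfold depthV at hv
      omega
    have hD : DD hT r v = ∅ := by rw [DD, h0]; rfl
    rw [hD]
    refine ⟨?_, ?_, ?_⟩ <;> intros <;> simp_all
  | succ n ih =>
    intro v hv
    by_cases hvr : v = r
    · subst hvr
      rw [DD_self]
      refine ⟨?_, ?_, ?_⟩ <;> intros <;> simp_all
    obtain ⟨u, hadj, hd, hedges⟩ := exists_parent hT r hvr
    have hDv : DD hT r v = insert s(u, v) (DD hT r u) := by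
      rw [DD, DD, hedges]
      ext; simp [or_comm]
    have hnotin : s(u, v) ∉ DD hT r u := by
      have hnd := (pw_isPath hT r v).isTrail.edges_nodup
      rw [hedges] at hnd
      rw [List.nodup_append] at hnd
      intro hcon
      rw [DD, List.mem_toFinset] at hcon
      exact hnd.2.2 _ hcon _ (by simp) rfl
    have hdepE : depthE hT r s(u, v) = depthV hT r v := by
      simp only [depthE, Sym2.lift_mk]
      omega
    have hchainE : chainE hT r s(u, v) = DD hT r v := by
      simp only [chainE, Sym2.lift_mk]
      rw [if_pos (by omega)]
    have hu := ih u (by omega)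
    have hbound : ∀ e ∈ DD hT r v, 1 ≤ depthE hT r e ∧ depthE hT r e ≤ depthV hT r v := by
      intro e he
      rw [hDv, Finset.mem_insert] at he
      rcases he with rfl | he
      · rw [hdepE]
        omega
      · have := hu.1 e he
        omega
    refine ⟨hbound, ?_, ?_⟩
    · intro e he
      rw [hDv, Finset.mem_insert] at he
      rcases he with rfl | he
      · constructor
        · rw [hchainE]
          ext x
          rw [Finset.mem_filter]
          constructor
          · intro hx
            exact ⟨hx, by rw [hdepE]; exact (hbound x hx).2⟩
          · exact fun hx => hx.1
        · rw [hchainE, hDv]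
          exact Finset.mem_insert_self _ _
      · obtain ⟨hche, hmeme⟩ := hu.2.1 e he
        have hedep := (hu.1 e he).2
        constructor
        · rw [hche, hDv, Finset.filter_insert, if_neg (by rw [hdepE]; omega)]
        · exact hmeme
    · intro e1 he1 e2 he2 hdeq
      rw [hDv, Finset.mem_insert] at he1 he2
      rcases he1 with rfl | he1 <;> rcases he2 with rfl | he2
      · rfl
      · exfalso
        have := (hu.1 e2 he2).2
        rw [hdepE] at hdeq
        omega
      · exfalso
        have := (hu.1 e1 he1).2
        rw [hdepE] at hdeq
        omega
      · exact hu.2.2 e1 he1 e2 he2 hdeq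

lemma edge_basic (hT : T.IsTree) (r : V) : ∀ (e : Sym2 V), e ∈ T.edgeSet →
    ∃ v : V, chainE hT r e = DD hT r v ∧ e ∈ DD hT r v ∧ depthE hT r e = depthV hT r v := by
  intro e
  induction e using Sym2.ind with
  | _ x y =>
    intro he
    rw [SimpleGraph.mem_edgeSet] at he
    rcases adj_dichotomy hT r he with ⟨hd, hedges⟩ | ⟨hd, hedges⟩
    · refine ⟨y, ?_, ?_, ?_⟩
      · simp only [chainE, Sym2.lift_mk]
        rw [if_pos (by omega)]
      · rw [DD, hedges]
        simp
      · simp only [depthE, Sym2.lift_mk]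
        omega
    · refine ⟨x, ?_, ?_, ?_⟩
      · simp only [chainE, Sym2.lift_mk]
        rw [if_neg (by omega), if_pos (by omega)]
      · rw [DD, hedges]
        rw [Sym2.eq_swap]
        simp
      · simp only [depthE, Sym2.lift_mk]
        omega

lemma sdiff_vert (hT : T.IsTree) (r a b : V) :
    DD hT r a \ DD hT r b = ∅ ∨
    ∃ e ∈ DD hT r a \ DD hT r b, ∃ d, DD hT r a \ DD hT r b =
      (chainE hT r e).filter (fun x => d ≤ depthE hT r x) := by
  by_cases har : a = r
  · left
    subst har
    simp [DD_self]
  obtain ⟨u, hadj, hd, hedges⟩ := exists_parent hT r har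
  have hel : s(u, a) ∈ DD hT r a := by rw [DD, hedges]; simp
  have hchain : chainE hT r s(u, a) = DD hT r a := by
    simp only [chainE, Sym2.lift_mk]
    rw [if_pos (by omega)]
  have hdepel : depthE hT r s(u, a) = depthV hT r a := by
    simp only [depthE, Sym2.lift_mk]
    omega
  have hMa := master hT r (depthV hT r a) a le_rfl
  have hMb := master hT r (depthV hT r b) b le_rfl
  by_cases helb : s(u, a) ∈ DD hT r b
  · left
    have h1 := (hMb.2.1 _ helb).1
    have hsub : DD hT r a ⊆ DD hT r b := by
      rw [← hchain, h1]
      exact Finset.filter_subset _ _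
    exact Finset.sdiff_eq_empty_iff_subset.mpr hsub
  · right
    refine ⟨s(u, a), Finset.mem_sdiff.mpr ⟨hel, helb⟩,
      (DD hT r a ∩ DD hT r b).sup (depthE hT r) + 1, ?_⟩
    set t := (DD hT r a ∩ DD hT r b).sup (depthE hT r) with ht
    have claim : ∀ x ∈ DD hT r a, depthE hT r x ≤ t → x ∈ DD hT r b := by
      intro x hxa hxt
      rcases Finset.eq_empty_or_nonempty (DD hT r a ∩ DD hT r b) with hemp | hne
      · exfalso
        rw [ht, hemp, Finset.sup_empty] at hxt
        have := (hMa.1 x hxa).1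
        simp at hxt
        omega
      · obtain ⟨y, hy, hyt⟩ := Finset.exists_mem_eq_sup _ hne (depthE hT r)
        have hy' := Finset.mem_inter.mp hy
        have h2 := (hMa.2.1 y hy'.1).1
        have h3 := (hMb.2.1 y hy'.2).1
        have hxc : x ∈ chainE hT r y := by
          rw [h2, Finset.mem_filter]
          refine ⟨hxa, ?_⟩
          rw [ht, hyt] at hxt
          exact hxt
        rw [h3, Finset.mem_filter] at hxc
        exact hxc.1
    rw [hchain]
    ext x
    rw [Finset.mem_sdiff, Finset.mem_filter]
    constructor
    · rintro ⟨hxa, hxb⟩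
      refine ⟨hxa, ?_⟩
      by_contra hcon
      exact hxb (claim x hxa (by omega))
    · rintro ⟨hxa, hxd⟩
      refine ⟨hxa, ?_⟩
      intro hxb
      have hle := Finset.le_sup (f := depthE hT r) (Finset.mem_inter.mpr ⟨hxa, hxb⟩)
      omega

lemma edges_sd (hT : T.IsTree) (r : V) : ∀ {a b : V} (w : T.Walk a b), w.IsPath →
    w.edges.toFinset = (DD hT r a \ DD hT r b) ∪ (DD hT r b \ DD hT r a) := by
  intro a b w
  induction w with
  | nil => intro _; simp
  | @cons a c b h w' ih =>
    intro hp
    have hp' : w'.IsPath := hp.of_cons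
    have hanotin : a ∉ w'.support := ((SimpleGraph.Walk.cons_isPath_iff h w').mp hp).2
    have henotin : s(a, c) ∉ w'.edges := fun hmem =>
      hanotin (w'.fst_mem_support_of_mem_edges hmem)
    have hE := ih hp'
    have hkey : s(a, c) ∉ (DD hT r c \ DD hT r b) ∪ (DD hT r b \ DD hT r c) := by
      rw [← hE]
      simpa [List.mem_toFinset] using henotin
    have hgoal : (SimpleGraph.Walk.cons h w').edges.toFinset
        = insert s(a, c) (w'.edges.toFinset) := by
      rw [SimpleGraph.Walk.edges_cons, List.toFinset_cons]
    rw [hgoal, hE]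
    rcases adj_dichotomy hT r h with ⟨hd, hedges⟩ | ⟨hd, hedges⟩
    · -- DD c = insert s(a,c) (DD a)
      have hDc : DD hT r c = insert s(a, c) (DD hT r a) := by
        rw [DD, DD, hedges]
        ext; simp [or_comm]
      have hnotinDa : s(a, c) ∉ DD hT r a := by
        have hnd := (pw_isPath hT r c).isTrail.edges_nodup
        rw [hedges, List.nodup_append] at hnd
        intro hcon
        rw [DD, List.mem_toFinset] at hcon
        exact hnd.2.2 _ hcon _ (by simp) rfl
      ext x
      by_cases hxe : x = s(a, c)
      · subst hxe
        simp only [Finset.mem_insert, Finset.mem_union, Finset.mem_sdiff, true_or, true_iff]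
        simp only [Finset.mem_union, Finset.mem_sdiff, not_or, not_and, not_not] at hkey
        have hxc : s(a, c) ∈ DD hT r c := by rw [hDc]; exact Finset.mem_insert_self _ _
        exact Or.inr ⟨hkey.1 hxc, hnotinDa⟩
      · have hiff : x ∈ DD hT r c ↔ x ∈ DD hT r a := by
          rw [hDc, Finset.mem_insert]
          simp [hxe]
        simp only [Finset.mem_insert, Finset.mem_union, Finset.mem_sdiff, hxe, false_or]
        rw [hiff]
    · -- DD a = insert s(a,c) (DD c)
      have hDa : DD hT r a = insert s(a, c) (DD hT r c) := by
        rw [DD, DD, hedges]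
        rw [Sym2.eq_swap (a := a)]
        ext; simp [or_comm]
      have hnotinDc : s(a, c) ∉ DD hT r c := by
        have hnd := (pw_isPath hT r a).isTrail.edges_nodup
        rw [hedges, List.nodup_append] at hnd
        intro hcon
        rw [DD, List.mem_toFinset] at hcon
        exact hnd.2.2 _ hcon _ (by simp) rfl
      ext x
      by_cases hxe : x = s(a, c)
      · subst hxe
        simp only [Finset.mem_insert, Finset.mem_union, Finset.mem_sdiff, true_or, true_iff]
        simp only [Finset.mem_union, Finset.mem_sdiff, not_or, not_and, not_not] at hkey
        have hxa : s(a, c) ∈ DD hT r a := by rw [hDa]; exact Finset.mem_insert_self _ _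
        exact Or.inl ⟨hxa, fun hb => hnotinDc (hkey.2 hb)⟩
      · have hiff : x ∈ DD hT r a ↔ x ∈ DD hT r c := by
          rw [hDa, Finset.mem_insert]
          simp [hxe]
        simp only [Finset.mem_insert, Finset.mem_union, Finset.mem_sdiff, hxe, false_or]
        rw [hiff]

end TreeDetAux


/-- If `T` is a tree on `n` vertices and `𝒫` is a family of `n - 1` paths in `T`
(indexed, like the columns, by the `n - 1` edges of `T`), then the path-edge incidence
matrix `A(𝒫, T)` satisfies `|det A(𝒫, T)| ≤ 2^(n-1)`. -/
theorem abs_det_pathEdgeIncidence_le {V : Type} [Fintype V] [DecidableEq V] (n : ℕ)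
    (T : SimpleGraph V) (hT : T.IsTree) (hn : Fintype.card V = n)
    (P : T.edgeSet → Σ u : V, Σ v : V, T.Walk u v)
    (hP : ∀ e, (P e).2.2.IsPath)
    (A : Matrix T.edgeSet T.edgeSet ℝ)
    (hA : ∀ p e, A p e = if (e : Sym2 V) ∈ (P p).2.2.edges then 1 else 0) :
    |A.det| ≤ 2 ^ (n - 1) := by
  classical
  obtain ⟨r⟩ : Nonempty V := hT.isConnected.nonempty
  set dep : T.edgeSet → ℕ := fun x => TreeDetAux.depthE hT r x.val with hdep
  set ch : T.edgeSet → Finset T.edgeSet :=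
    fun x => (TreeDetAux.chainE hT r x.val).subtype (fun y => y ∈ T.edgeSet) with hch
  have hbasic := TreeDetAux.edge_basic hT r
  have hDDsub : ∀ v : V, ∀ x ∈ TreeDetAux.DD hT r v, x ∈ T.edgeSet := by
    intro v x hx
    rw [TreeDetAux.DD, List.mem_toFinset] at hx
    exact SimpleGraph.Walk.edges_subset_edgeSet _ hx
  -- the four axioms
  have hmem : ∀ e : T.edgeSet, e ∈ ch e := by
    intro e
    obtain ⟨v, hc, hm, -⟩ := hbasic e.val e.prop
    rw [hch, Finset.mem_subtype, hc]
    exact hm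
  have hle : ∀ e x : T.edgeSet, x ∈ ch e → dep x ≤ dep e := by
    intro e x hx
    obtain ⟨v, hc, hm, hdv⟩ := hbasic e.val e.prop
    rw [hch, Finset.mem_subtype, hc] at hx
    have := ((TreeDetAux.master hT r _ v le_rfl).1 x.val hx).2
    rw [hdep]
    dsimp only
    omega
  have hinj : ∀ e x y : T.edgeSet, x ∈ ch e → y ∈ ch e → dep x = dep y → x = y := by
    intro e x y hx hy hd
    obtain ⟨v, hc, hm, -⟩ := hbasic e.val e.prop
    rw [hch, Finset.mem_subtype, hc] at hx hy
    exact Subtype.ext ((TreeDetAux.master hT r _ v le_rfl).2.2 x.val hx y.val hy hd)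
  have hpre : ∀ e x : T.edgeSet, x ∈ ch e →
      ch x = (ch e).filter (fun y => dep y ≤ dep x) := by
    intro e x hx
    obtain ⟨v, hc, hm, -⟩ := hbasic e.val e.prop
    rw [hch, Finset.mem_subtype, hc] at hx
    have h2 := ((TreeDetAux.master hT r _ v le_rfl).2.1 x.val hx).1
    ext z
    rw [hch]
    simp only [Finset.mem_subtype, Finset.mem_filter]
    rw [h2, hc, Finset.mem_filter]
  -- decompose the rows
  set B : T.edgeSet → T.edgeSet → ℝ := fun p j =>
    if (j : Sym2 V) ∈ TreeDetAux.DD hT r (P p).1 \ TreeDetAux.DD hT r (P p).2.1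
    then 1 else 0 with hB
  set C : T.edgeSet → T.edgeSet → ℝ := fun p j =>
    if (j : Sym2 V) ∈ TreeDetAux.DD hT r (P p).2.1 \ TreeDetAux.DD hT r (P p).1
    then 1 else 0 with hC
  have hAeq : A = (B + C : T.edgeSet → T.edgeSet → ℝ) := by
    funext p j
    have hsd := TreeDetAux.edges_sd hT r (P p).2.2 (hP p)
    have hmemiff : (j : Sym2 V) ∈ (P p).2.2.edges ↔
        (j : Sym2 V) ∈ (TreeDetAux.DD hT r (P p).1 \ TreeDetAux.DD hT r (P p).2.1) ∪
          (TreeDetAux.DD hT r (P p).2.1 \ TreeDetAux.DD hT r (P p).1) := by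
      rw [← hsd, List.mem_toFinset]
    show A p j = B p j + C p j
    rw [hA p j, hB, hC]
    dsimp only
    by_cases h1 : (j : Sym2 V) ∈ TreeDetAux.DD hT r (P p).1 \ TreeDetAux.DD hT r (P p).2.1
    · have h2 : (j : Sym2 V) ∉ TreeDetAux.DD hT r (P p).2.1 \ TreeDetAux.DD hT r (P p).1 := by
        rw [Finset.mem_sdiff] at h1 ⊢
        tauto
      rw [if_pos h1, if_neg h2, if_pos (hmemiff.mpr (Finset.mem_union_left _ h1))]
      norm_num
    · by_cases h2 : (j : Sym2 V) ∈ TreeDetAux.DD hT r (P p).2.1 \ TreeDetAux.DD hT r (P p).1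
      · rw [if_neg h1, if_pos h2, if_pos (hmemiff.mpr (Finset.mem_union_right _ h2))]
        norm_num
      · rw [if_neg h1, if_neg h2, if_neg (by rw [hmemiff, Finset.mem_union]; tauto)]
        norm_num
  -- each piecewise matrix has vertical rows
  have hpiece : ∀ sFin : Finset T.edgeSet,
      |Matrix.det (sFin.piecewise B C : Matrix T.edgeSet T.edgeSet ℝ)| ≤ 1 := by
    intro sFin
    refine abstract_det_le_one (Fintype.card T.edgeSet) T.edgeSet le_rfl dep ch
      hmem hle hinj hpre _ ?_
    intro i
    have hrowB : ∀ (a b : V), ∃ s : Finset T.edgeSet, VertRow dep ch s ∧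
        ∀ j : T.edgeSet, (if (j : Sym2 V) ∈ TreeDetAux.DD hT r a \ TreeDetAux.DD hT r b
          then (1:ℝ) else 0) = if j ∈ s then 1 else 0 := by
      intro a b
      refine ⟨(TreeDetAux.DD hT r a \ TreeDetAux.DD hT r b).subtype (fun y => y ∈ T.edgeSet),
        ?_, ?_⟩
      · rcases TreeDetAux.sdiff_vert hT r a b with hemp | ⟨el, helm, d, hform⟩
        · left
          rw [hemp]
          rfl
        · right
          have heledge : el ∈ T.edgeSet :=
            hDDsub a el (Finset.mem_sdiff.mp helm).1
          refine ⟨⟨el, heledge⟩, ?_, d, ?_⟩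
          · rw [Finset.mem_subtype]
            exact helm
          · ext z
            rw [hch]
            simp only [Finset.mem_subtype, Finset.mem_filter, hdep]
            rw [hform, Finset.mem_filter]
      · intro j
        simp only [Finset.mem_subtype]
    by_cases hi : i ∈ sFin
    · obtain ⟨s, hv, hrow⟩ := hrowB (P i).1 (P i).2.1
      refine ⟨s, hv, fun j => ?_⟩
      have hpw := congrFun (Finset.piecewise_eq_of_mem sFin B C hi) j
      rw [hpw]
      exact hrow j
    · obtain ⟨s, hv, hrow⟩ := hrowB (P i).2.1 (P i).1
      refine ⟨s, hv, fun j => ?_⟩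
      have hpw := congrFun (Finset.piecewise_eq_of_notMem sFin B C hi) j
      rw [hpw]
      exact hrow j
  -- multilinear expansion
  have hexp : A.det = ∑ sFin : Finset T.edgeSet,
      Matrix.det (sFin.piecewise B C : Matrix T.edgeSet T.edgeSet ℝ) := by
    have h := MultilinearMap.map_add_univ
      (Matrix.detRowAlternating (R := ℝ) (n := T.edgeSet)).toMultilinearMap B C
    simp only [AlternatingMap.coe_multilinearMap] at h
    rw [hAeq]
    exact h
  have hcardι : Fintype.card T.edgeSet = n - 1 := by
    have h1 := hT.card_edgeFinset
    have h2 : T.edgeFinset.card = Fintype.card T.edgeSet := SimpleGraph.edgeFinset_card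
    omega
  calc |A.det| = |∑ sFin : Finset T.edgeSet,
      Matrix.det (sFin.piecewise B C : Matrix T.edgeSet T.edgeSet ℝ)| := by rw [hexp]
    _ ≤ ∑ sFin : Finset T.edgeSet,
      |Matrix.det (sFin.piecewise B C : Matrix T.edgeSet T.edgeSet ℝ)| :=
        Finset.abs_sum_le_sum_abs _ _
    _ ≤ ∑ _sFin : Finset T.edgeSet, (1:ℝ) := Finset.sum_le_sum (fun s _ => hpiece s)
    _ = (Fintype.card (Finset T.edgeSet) : ℝ) := by
        rw [Finset.sum_const, Finset.card_univ, nsmul_eq_mul, mul_one]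
    _ = 2 ^ (n - 1) := by
        rw [Fintype.card_finset, hcardι]
        push_cast
        ring
end

section
/- For every positive integer n divisible by 7, there exists a matrix A ∈ {0,1}^{n×n} containing exactly 3n ones such that det(A) = 24^(n/7). -/
open scoped Classical

def fanoZ : Matrix (Fin 7) (Fin 7) ℤ :=
  !![1,1,1,0,0,0,0;
     1,0,0,1,1,0,0;
     0,1,0,1,0,1,0;
     1,0,0,0,0,1,1;
     0,1,0,0,1,0,1;
     0,0,1,1,0,0,1;
     0,0,1,0,1,1,0]

def fanoL : Matrix (Fin 7) (Fin 7) ℤ :=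
  !![1,0,0,0,0,0,0;
     1,1,0,0,0,0,0;
     0,-1,1,0,0,0,0;
     1,1,0,1,0,0,0;
     0,-1,1,1,1,0,0;
     0,0,-1,-3,-1,1,0;
     0,0,-1,-2,0,2,1]

def fanoU : Matrix (Fin 7) (Fin 7) ℤ :=
  !![1,1,1,0,0,0,0;
     0,-1,-1,1,1,0,0;
     0,0,-1,2,1,1,0;
     0,0,0,-1,-1,1,1;
     0,0,0,0,2,-2,0;
     0,0,0,0,0,2,4;
     0,0,0,0,0,0,-6]

theorem fano_LU : fanoZ = fanoL * fanoU := by decide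

theorem fanoL_tri : fanoL.BlockTriangular OrderDual.toDual := by
  intro i j h
  fin_cases i <;> fin_cases j <;> revert h <;> decide

theorem fanoU_tri : fanoU.BlockTriangular id := by
  intro i j h
  fin_cases i <;> fin_cases j <;> revert h <;> decide

theorem fanoZ_det : fanoZ.det = 24 := by
  rw [fano_LU, Matrix.det_mul,
    Matrix.det_of_lowerTriangular fanoL fanoL_tri,
    Matrix.det_of_upperTriangular fanoU_tri]
  decide

theorem fanoZ_entries : ∀ i j, fanoZ i j = 0 ∨ fanoZ i j = 1 := by
  intro i j; fin_cases i <;> fin_cases j <;> simp [fanoZ]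

theorem fanoZ_sum : ∑ a : Fin 7, ∑ b : Fin 7, fanoZ a b = 21 := by decide

noncomputable def fano : Matrix (Fin 7) (Fin 7) ℝ := fanoZ.map Int.cast

theorem fano_det : fano.det = 24 := by
  have h := (Int.castRingHom ℝ).map_det fanoZ
  rw [fanoZ_det] at h
  have h2 : fano = (Int.castRingHom ℝ).mapMatrix fanoZ := rfl
  rw [h2, ← h]
  norm_num

theorem fano_entries : ∀ i j, fano i j = 0 ∨ fano i j = 1 := by
  intro i j
  have : fano i j = ((fanoZ i j : ℤ) : ℝ) := rfl
  rcases fanoZ_entries i j with h | h <;> [left; right] <;> rw [this, h] <;> norm_num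

theorem fano_sum : ∑ a : Fin 7, ∑ b : Fin 7, fano a b = 21 := by
  have h : ∀ a b, fano a b = ((fanoZ a b : ℤ) : ℝ) := fun _ _ => rfl
  simp_rw [h]
  exact_mod_cast fanoZ_sum

/-- For every positive `n` divisible by `7` there is an `n × n` 0/1-matrix containing
exactly `3n` ones whose determinant is `24^(n/7)`. -/
theorem exists_det_eq_twentyfour_pow_n_div_seven (n : ℕ) (hn : 0 < n) (hdvd : 7 ∣ n) :
    ∃ A : Matrix (Fin n) (Fin n) ℝ,
      (∀ i j, A i j = 0 ∨ A i j = 1) ∧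
      (Finset.univ.filter fun p : Fin n × Fin n => A p.1 p.2 = 1).card = 3 * n ∧
      A.det = 24 ^ ((n : ℝ) / 7) := by
  obtain ⟨k, hk⟩ := hdvd
  let e : Fin 7 × Fin k ≃ Fin n := finProdFinEquiv.trans (finCongr hk.symm)
  let B : Matrix (Fin 7 × Fin k) (Fin 7 × Fin k) ℝ :=
    Matrix.blockDiagonal fun _ : Fin k => fano
  have hB : ∀ x y : Fin 7 × Fin k, B x y = if x.2 = y.2 then fano x.1 y.1 else 0 :=
    fun x y => Matrix.blockDiagonal_apply _ _ _
  have hB01 : ∀ x y : Fin 7 × Fin k, B x y = 0 ∨ B x y = 1 := by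
    intro x y
    rw [hB]
    split
    · exact fano_entries _ _
    · exact Or.inl rfl
  have hA : ∀ i j : Fin n, (Matrix.reindex e e B) i j = B (e.symm i) (e.symm j) :=
    fun _ _ => rfl
  refine ⟨Matrix.reindex e e B, ?_, ?_, ?_⟩
  · intro i j
    rw [hA]
    exact hB01 _ _
  · have key : ((Finset.univ.filter fun p : Fin n × Fin n =>
        (Matrix.reindex e e B) p.1 p.2 = 1).card : ℝ) = 3 * n := by
      rw [Finset.card_filter]
      push_cast
      have h1 : ∀ p : Fin n × Fin n,
          (if (Matrix.reindex e e B) p.1 p.2 = 1 then (1:ℝ) else 0) =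
            (Matrix.reindex e e B) p.1 p.2 := by
        intro p
        rw [hA]
        rcases hB01 (e.symm p.1) (e.symm p.2) with h | h <;> simp [h]
      rw [Finset.sum_congr rfl fun p _ => h1 p]
      have h2 : ∑ p : Fin n × Fin n, (Matrix.reindex e e B) p.1 p.2
          = ∑ q : (Fin 7 × Fin k) × (Fin 7 × Fin k), B q.1 q.2 := by
        apply Fintype.sum_equiv ((e.prodCongr e).symm)
        intro q
        rw [hA]
        rfl
      rw [h2, Fintype.sum_prod_type]
      have h4 : ∀ x : Fin 7 × Fin k, ∑ y : Fin 7 × Fin k, B x y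
          = ∑ b : Fin 7, fano x.1 b := by
        intro x
        rw [Fintype.sum_prod_type]
        have h5 : ∀ b : Fin 7, ∑ j : Fin k, B x (b, j) = fano x.1 b := by
          intro b
          simp_rw [hB]
          simp
        simp_rw [h5]
      rw [Finset.sum_congr rfl fun x _ => h4 x, Fintype.sum_prod_type]
      simp only [Finset.sum_const, Finset.card_univ, Fintype.card_fin, nsmul_eq_mul]
      rw [← Finset.mul_sum, fano_sum, hk]
      push_cast
      ring
    exact_mod_cast key
  · rw [Matrix.det_reindex_self, Matrix.det_blockDiagonal]
    simp only [fano_det, Finset.prod_const, Finset.card_univ, Fintype.card_fin]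
    have hx : ((n : ℝ) / 7) = (k : ℝ) := by rw [hk]; push_cast; ring
    rw [hx, Real.rpow_natCast]
end

section
/- Let r₁, r₂, r₃, r₄ ∈ {−1,0,1}ⁿ be four (row) vectors, each having exactly four nonzero entries, such that in each rᵢ the nonzero entries alternate in sign when read in order of increasing coordinate index (i.e., consecutive nonzero entries have opposite signs). Suppose there is a coordinate j such that all four vectors have a nonzero entry in coordinate j. Then there exist distinct indices i and i' in {1,2,3,4} such that the standard inner product of rᵢ and rᵢ' is nonzero. -/
open scoped Classical

private lemma flip_sign {a b : ℝ} (ha : a = -1 ∨ a = 0 ∨ a = 1)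
    (hb : b = -1 ∨ b = 0 ∨ b = 1) (h : a * b < 0) : b = -a := by
  rcases ha with rfl | rfl | rfl <;> rcases hb with rfl | rfl | rfl <;> norm_num at h <;> norm_num

/-- Let `r 1, …, r 4 ∈ {-1,0,1}ⁿ` each have exactly four nonzero entries whose signs
alternate (consecutive nonzero entries, in order of increasing index, have opposite
signs).  If all four vectors have a nonzero entry in some common coordinate `j`, then
two of them have nonzero inner product. -/
theorem exists_nonorthogonal_pair (n : ℕ) (r : Fin 4 → Fin n → ℝ)
    (hval : ∀ i j, r i j = -1 ∨ r i j = 0 ∨ r i j = 1)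
    (hfour : ∀ i, (Finset.univ.filter fun j => r i j ≠ 0).card = 4)
    (halt : ∀ (i : Fin 4) (j j' : Fin n), j < j' → r i j ≠ 0 → r i j' ≠ 0 →
      (∀ j'' : Fin n, j < j'' → j'' < j' → r i j'' = 0) → r i j * r i j' < 0)
    (hcommon : ∃ j : Fin n, ∀ i, r i j ≠ 0) :
    ∃ i i' : Fin 4, i ≠ i' ∧ ∑ j, r i j * r i' j ≠ 0 := by
  by_contra hcon
  push_neg at hcon
  obtain ⟨j, hj⟩ := hcommon
  -- squared norm of each row is 4
  have hone : ∀ (i : Fin 4) (k : Fin n), r i k ≠ 0 → r i k * r i k = 1 := by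
    intro i k hk
    rcases hval i k with h | h | h <;> simp [h] at hk ⊢
  have hnorm : ∀ i : Fin 4, ∑ k, r i k * r i k = 4 := by
    intro i
    have h1 : ∑ k, r i k * r i k = ∑ k, (if r i k ≠ 0 then (1:ℝ) else 0) := by
      refine Finset.sum_congr rfl fun k _ => ?_
      by_cases hk : r i k = 0
      · simp [hk]
      · simp [hk, hone i k hk]
    rw [h1, Finset.sum_boole, hfour i]
    norm_num
  -- each row sums to zero
  have hsum0 : ∀ i : Fin 4, ∑ k, r i k = 0 := by
    intro i
    set S := Finset.univ.filter fun k => r i k ≠ 0 with hS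
    have hlen : (S.sort (· ≤ ·)).length = 4 := by
      rw [Finset.length_sort]; exact hfour i
    have hst : List.Pairwise (· < ·) (S.sort (· ≤ ·)) := S.sortedLT_sort.pairwise
    have hmem : ∀ k : Fin n, k ∈ S.sort (· ≤ ·) ↔ r i k ≠ 0 := by
      intro k; rw [Finset.mem_sort, hS, Finset.mem_filter]; simp
    rcases hlist : S.sort (· ≤ ·) with _ | ⟨x1, _ | ⟨x2, _ | ⟨x3, _ | ⟨x4, _ | ⟨x5, t⟩⟩⟩⟩⟩ <;>
      rw [hlist] at hlen <;> simp at hlen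
    rw [hlist] at hst hmem
    simp only [List.pairwise_cons, List.mem_cons, List.not_mem_nil, or_false,
      List.mem_singleton] at hst hmem
    obtain ⟨h1, h2, h3, -⟩ := hst
    have h12 : x1 < x2 := h1 x2 (Or.inl rfl)
    have h13 : x1 < x3 := h1 x3 (Or.inr (Or.inl rfl))
    have h14 : x1 < x4 := h1 x4 (Or.inr (Or.inr rfl))
    have h23 : x2 < x3 := h2 x3 (Or.inl rfl)
    have h24 : x2 < x4 := h2 x4 (Or.inr rfl)
    have h34 : x3 < x4 := h3 x4 rfl
    have hmem' : ∀ k : Fin n, r i k ≠ 0 ↔ k = x1 ∨ k = x2 ∨ k = x3 ∨ k = x4 := by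
      intro k; exact (hmem k).symm
    -- zero in between
    have hz12 : ∀ k : Fin n, x1 < k → k < x2 → r i k = 0 := by
      intro k hk1 hk2
      by_contra hk
      rcases (hmem' k).1 hk with rfl | rfl | rfl | rfl
      · exact absurd hk1 (lt_irrefl _)
      · exact absurd hk2 (lt_irrefl _)
      · exact absurd (hk2.trans h23) (lt_irrefl _)
      · exact absurd (hk2.trans h24) (lt_irrefl _)
    have hz23 : ∀ k : Fin n, x2 < k → k < x3 → r i k = 0 := by
      intro k hk1 hk2
      by_contra hk
      rcases (hmem' k).1 hk with rfl | rfl | rfl | rfl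
      · exact absurd (h12.trans hk1) (lt_irrefl _)
      · exact absurd hk1 (lt_irrefl _)
      · exact absurd hk2 (lt_irrefl _)
      · exact absurd (hk2.trans h34) (lt_irrefl _)
    have hz34 : ∀ k : Fin n, x3 < k → k < x4 → r i k = 0 := by
      intro k hk1 hk2
      by_contra hk
      rcases (hmem' k).1 hk with rfl | rfl | rfl | rfl
      · exact absurd (h13.trans hk1) (lt_irrefl _)
      · exact absurd (h23.trans hk1) (lt_irrefl _)
      · exact absurd hk1 (lt_irrefl _)
      · exact absurd hk2 (lt_irrefl _)
    have hx1 : r i x1 ≠ 0 := (hmem' x1).2 (Or.inl rfl)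
    have hx2 : r i x2 ≠ 0 := (hmem' x2).2 (Or.inr (Or.inl rfl))
    have hx3 : r i x3 ≠ 0 := (hmem' x3).2 (Or.inr (Or.inr (Or.inl rfl)))
    have hx4 : r i x4 ≠ 0 := (hmem' x4).2 (Or.inr (Or.inr (Or.inr rfl)))
    have e2 : r i x2 = -r i x1 :=
      flip_sign (hval i x1) (hval i x2) (halt i x1 x2 h12 hx1 hx2 hz12)
    have e3 : r i x3 = -r i x2 :=
      flip_sign (hval i x2) (hval i x3) (halt i x2 x3 h23 hx2 hx3 hz23)
    have e4 : r i x4 = -r i x3 :=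
      flip_sign (hval i x3) (hval i x4) (halt i x3 x4 h34 hx3 hx4 hz34)
    have hSfin : S = {x1, x2, x3, x4} := by
      ext k
      rw [hS, Finset.mem_filter]
      simp [hmem' k]
    have hsum : ∑ k, r i k = ∑ k ∈ S, r i k := by
      rw [hS, Finset.sum_filter_ne_zero]
    rw [hsum, hSfin]
    rw [Finset.sum_insert (by simp [h12.ne, h13.ne, h14.ne]),
      Finset.sum_insert (by simp [h23.ne, h24.ne]),
      Finset.sum_insert (by simp [h34.ne]), Finset.sum_singleton]
    linarith [e2, e3, e4]
  -- main argument
  set w : Fin n → ℝ := fun k => ∑ i, r i j * r i k with hw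
  have hdiag : ∀ i i' : Fin 4,
      (r i j * r i' j) * ∑ k, r i k * r i' k = if i = i' then 4 else 0 := by
    intro i i'
    by_cases h : i = i'
    · subst h
      rw [hnorm i, hone i j (hj i)]
      simp
    · rw [hcon i i' h]
      simp [h]
  have hW2 : ∑ k, w k * w k = 16 := by
    have step1 : ∀ k : Fin n, w k * w k = ∑ i, ∑ i', (r i j * r i' j) * (r i k * r i' k) := by
      intro k
      rw [hw]
      rw [Finset.sum_mul_sum]
      refine Finset.sum_congr rfl fun i _ => Finset.sum_congr rfl fun i' _ => by ring
    calc ∑ k, w k * w k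
        = ∑ k, ∑ i, ∑ i', (r i j * r i' j) * (r i k * r i' k) := by
          exact Finset.sum_congr rfl fun k _ => step1 k
      _ = ∑ i, ∑ i', ∑ k, (r i j * r i' j) * (r i k * r i' k) := by
          rw [Finset.sum_comm]
          refine Finset.sum_congr rfl fun i _ => ?_
          rw [Finset.sum_comm]
      _ = ∑ i, ∑ i', (r i j * r i' j) * ∑ k, r i k * r i' k := by
          refine Finset.sum_congr rfl fun i _ => Finset.sum_congr rfl fun i' _ => ?_
          rw [Finset.mul_sum]
      _ = ∑ i : Fin 4, ∑ i' : Fin 4, if i = i' then (4:ℝ) else 0 := by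
          refine Finset.sum_congr rfl fun i _ => Finset.sum_congr rfl fun i' _ => hdiag i i'
      _ = 16 := by simp [Finset.sum_ite_eq]; norm_num
  have hWj : w j = 4 := by
    rw [hw]
    have : ∀ i : Fin 4, r i j * r i j = 1 := fun i => hone i j (hj i)
    simp only [this]
    norm_num
  have hWsum : ∑ k, w k = 0 := by
    rw [hw, Finset.sum_comm]
    refine Finset.sum_eq_zero fun i _ => ?_
    rw [← Finset.mul_sum, hsum0 i, mul_zero]
  -- w vanishes off j
  have hsplit2 : w j * w j + ∑ k ∈ Finset.univ.erase j, w k * w k = ∑ k, w k * w k :=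
    Finset.add_sum_erase _ (fun k => w k * w k) (Finset.mem_univ j)
  have herase0 : ∑ k ∈ Finset.univ.erase j, w k * w k = 0 := by
    rw [← hsplit2] at hW2
    rw [hWj] at hW2
    linarith
  have hzero : ∀ k ∈ Finset.univ.erase j, w k = 0 := by
    intro k hk
    have := (Finset.sum_eq_zero_iff_of_nonneg
      (fun k _ => mul_self_nonneg (w k))).1 herase0 k hk
    exact mul_self_eq_zero.1 this
  have hsplit1 : w j + ∑ k ∈ Finset.univ.erase j, w k = ∑ k, w k :=
    Finset.add_sum_erase _ (fun k => w k) (Finset.mem_univ j)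
  rw [Finset.sum_eq_zero hzero, add_zero, hWsum, hWj] at hsplit1
  norm_num at hsplit1
end
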